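/- For every natural number n, the identity ∑_{i=0}^{n} C(n, i)² · (n - i)! = n! · ∑_{i=0}^{n} C(n, i) / i! holds, where the right side is interpreted as ∑_{i=0}^{n} (n!/i!) · C(n, i). -/
import Mathlib

theorem stmt_2 (n : ℕ) :
    ∑ i ∈ Finset.range (n + 1), (n.choose i) ^ 2 * (n - i).factorial =
      ∑ i ∈ Finset.range (n + 1), (n.factorial / i.factorial) * n.choose i := by
  refine Finset.sum_congr rfl fun i hi => ?_
  have h : i ≤ n := Nat.lt_succ_iff.mp (Finset.mem_range.mp hi)
  have key : n.factorial = n.choose i * (n - i).factorial * i.factorial := by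
    rw [← Nat.choose_mul_factorial_mul_factorial h]; ring
  rw [Nat.div_eq_of_eq_mul_left i.factorial_pos key]
  ring
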